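/- Let (U, 𝔘) be a measurable space and ν a σ-finite measure on U. Let M > 0, κ > 0, β > 0, and let ψ : ℝ → ℝ be even and twice continuously differentiable with ψ''(t) ≥ 0 and |t|·ψ''(t) ≤ M for all t ∈ ℝ. Let σ : ℝ → ℝ and c : ℝ × U → ℝ be such that u ↦ c(x,u) is measurable for each x, |x − z + θ·(c(x,u) − c(z,u))| ≥ β·|x − z| for all x, z ∈ ℝ, u ∈ U and θ ∈ [0,1], and (σ(x) − σ(z))² + ∫_U (c(x,u) − c(z,u))² ν(du) ≤ κ·|x − z| for all x, z ∈ ℝ. Then for all x ≠ z, (1/2)·ψ''(x−z)·(σ(x)−σ(z))² + ∫_U [ψ(x−z+c(x,u)−c(z,u)) − ψ(x−z) − ψ'(x−z)·(c(x,u)−c(z,u))] ν(du) ≤ (M·κ/2)·(1 + 1/β). -/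

import Mathlib

open MeasureTheory Set

lemma taylor_aux {ψ : ℝ → ℝ} (hψ : ContDiff ℝ 2 ψ) {a b : ℝ} (hab : a < b) :
    ∃ x' ∈ Set.Ioo a b, ψ b - ψ a - deriv ψ a * (b - a) = deriv (deriv ψ) x' * (b - a)^2 / 2 := by
  have h2 : ContDiff ℝ (1 + 1 : ℕ) ψ := by exact_mod_cast hψ
  have hd1 : ContDiff ℝ 1 (deriv ψ) := (contDiff_succ_iff_deriv.mp h2).2.2
  have hψ1 : ContDiffOn ℝ 1 ψ (Set.Icc a b) := (hψ.of_le one_le_two).contDiffOn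
  have hEq : ∀ t ∈ Set.Ioo a b, iteratedDerivWithin 1 ψ (Set.Icc a b) t = deriv ψ t := by
    intro t ht
    rw [iteratedDerivWithin_one,
      derivWithin_of_mem_nhds (Icc_mem_nhds ht.1 ht.2)]
  have hd : DifferentiableOn ℝ (iteratedDerivWithin 1 ψ (Set.Icc a b)) (Set.Ioo a b) :=
    ((hd1.differentiable one_ne_zero).differentiableOn).congr hEq
  obtain ⟨x', hx', H⟩ := taylor_mean_remainder_lagrange (n := 1) hab.ne
    (by rw [Set.uIcc_of_le hab.le]; exact_mod_cast hψ1)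
    (by rw [Set.uIcc_of_le hab.le, Set.uIoo_of_le hab.le]; exact hd)
  rw [Set.uIoo_of_le hab.le] at hx'
  rw [Set.uIcc_of_le hab.le] at H
  refine ⟨x', hx', ?_⟩
  have h1 : iteratedDerivWithin 2 ψ (Set.Icc a b) x' = deriv (deriv ψ) x' := by
    have hmem : Set.Icc a b ∈ nhds x' := Icc_mem_nhds hx'.1 hx'.2
    have : iteratedDerivWithin 2 ψ (Set.univ ∩ Set.Icc a b) x' = iteratedDerivWithin 2 ψ Set.univ x' := by
      simp only [iteratedDerivWithin]
      rw [iteratedFDerivWithin_inter hmem]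
    rw [Set.univ_inter] at this
    rw [this, iteratedDerivWithin_univ]
    simp [iteratedDeriv_succ, iteratedDeriv_zero]
  have h3 : iteratedDerivWithin 1 ψ (Set.Icc a b) a = deriv ψ a := by
    rw [iteratedDerivWithin_one]
    exact ((hψ.differentiable two_ne_zero) a).derivWithin ((uniqueDiffOn_Icc hab) a (Set.left_mem_Icc.mpr hab.le))
  have h4 : taylorWithinEval ψ 1 (Set.Icc a b) a b = ψ a + (b - a) * deriv ψ a := by
    simp [taylorWithinEval_succ, h3]
  rw [h4] at H
  norm_num [Nat.factorial] at H
  rw [h1] at H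
  linarith

lemma taylor_theta {ψ : ℝ → ℝ} (heven : ∀ t : ℝ, ψ (-t) = ψ t) (hψ : ContDiff ℝ 2 ψ)
    (a h : ℝ) (hh : h ≠ 0) :
    ∃ θ ∈ Set.Icc (0:ℝ) 1,
      ψ (a + h) - ψ a - deriv ψ a * h = deriv (deriv ψ) (a + θ * h) * h^2 / 2 := by
  have hodd : ∀ t : ℝ, deriv ψ (-t) = - deriv ψ t := by
    intro t
    have h1 : (fun s : ℝ => ψ (-s)) = ψ := funext heven
    have h2 : deriv (fun s : ℝ => ψ (-s)) t = -deriv ψ (-t) := deriv_comp_neg _ _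
    rw [h1] at h2; linarith
  have heven2 : ∀ t : ℝ, deriv (deriv ψ) (-t) = deriv (deriv ψ) t := by
    intro t
    have h1 : (fun s : ℝ => - deriv ψ (-s)) = deriv ψ := by
      funext s; rw [hodd]; ring
    have h2 : deriv (fun s : ℝ => - (deriv ψ (-s))) t = -(deriv (fun s : ℝ => deriv ψ (-s)) t) := by
      exact deriv.neg
    have h3 : deriv (fun s : ℝ => deriv ψ (-s)) t = - deriv (deriv ψ) (-t) := deriv_comp_neg _ _
    rw [h1] at h2
    rw [h3] at h2
    linarith
  rcases hh.lt_or_gt with hneg | hpos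
  · obtain ⟨x', hx', H⟩ := taylor_aux hψ (show -a < -a + -h by linarith)
    refine ⟨(x' + a)/(-h), ⟨?_, ?_⟩, ?_⟩
    · apply div_nonneg (by linarith [hx'.1]) (by linarith)
    · rw [div_le_one (by linarith)]; linarith [hx'.2]
    · have hxeq : a + (x' + a)/(-h) * h = -x' := by
        rw [div_neg, neg_mul, div_mul_cancel₀ _ hh]; ring
      rw [hxeq, heven2 x']
      have e1 : ψ (-a + -h) = ψ (a + h) := by rw [show -a + -h = -(a+h) by ring, heven]
      have e2 : ψ (-a) = ψ a := heven a
      have e3 : deriv ψ (-a) = - deriv ψ a := hodd a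
      rw [e1, e2, e3, show (-a + -h - -a) = -h by ring, show ((-h):ℝ)^2 = h^2 by ring] at H
      linarith
  · obtain ⟨x', hx', H⟩ := taylor_aux hψ (show a < a + h by linarith)
    refine ⟨(x' - a)/h, ⟨?_, ?_⟩, ?_⟩
    · apply div_nonneg (by linarith [hx'.1]) hpos.le
    · rw [div_le_one hpos]; linarith [hx'.2]
    · have hxeq : a + (x' - a)/h * h = x' := by field_simp; ring
      rw [show a + h - a = h by ring] at H
      rw [hxeq]; linarith


theorem stmt_5 {U : Type*} [MeasurableSpace U] (ν : Measure U) [SigmaFinite ν]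
    (M κ β : ℝ) (hM : 0 < M) (hκ : 0 < κ) (hβ : 0 < β)
    (ψ : ℝ → ℝ) (heven : ∀ t : ℝ, ψ (-t) = ψ t) (hψ : ContDiff ℝ 2 ψ)
    (hconv : ∀ t : ℝ, 0 ≤ deriv (deriv ψ) t)
    (hbd : ∀ t : ℝ, |t| * deriv (deriv ψ) t ≤ M)
    (σ : ℝ → ℝ) (c : ℝ → U → ℝ)
    (hmeas : ∀ x : ℝ, Measurable (c x))
    (hnondeg : ∀ x z : ℝ, ∀ u : U, ∀ θ ∈ Set.Icc (0:ℝ) 1,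
      β * |x - z| ≤ |x - z + θ * (c x u - c z u)|)
    (hcont : ∀ x z : ℝ,
      ENNReal.ofReal ((σ x - σ z) ^ 2) +
        (∫⁻ u, ENNReal.ofReal ((c x u - c z u) ^ 2) ∂ν) ≤
        ENNReal.ofReal (κ * |x - z|)) :
    ∀ x z : ℝ, x ≠ z →
      ENNReal.ofReal ((1 / 2) * deriv (deriv ψ) (x - z) * (σ x - σ z) ^ 2) +
        (∫⁻ u, ENNReal.ofReal (ψ (x - z + c x u - c z u) - ψ (x - z) -
          deriv ψ (x - z) * (c x u - c z u)) ∂ν) ≤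
        ENNReal.ofReal ((M * κ / 2) * (1 + 1 / β)) := by
  intro x z hxz
  have ha0 : x - z ≠ 0 := sub_ne_zero.mpr hxz
  have haa : 0 < |x - z| := abs_pos.mpr ha0
  set C : ℝ := M * (1 + 1/β) / (2 * |x - z|) with hC
  have hC0 : 0 ≤ C := by positivity
  -- pointwise bound on the integrand
  have key : ∀ u : U, ψ (x - z + c x u - c z u) - ψ (x - z) -
      deriv ψ (x - z) * (c x u - c z u) ≤ C * (c x u - c z u)^2 := by
    intro u
    set h := c x u - c z u with hh
    have harr : x - z + c x u - c z u = (x - z) + h := by rw [hh]; ring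
    rw [harr]
    rcases eq_or_ne h 0 with h0 | h0
    · simp [h0]
    · obtain ⟨θ, hθ, heq⟩ := taylor_theta heven hψ (x - z) h h0
      rw [heq]
      have hx' := hnondeg x z u θ hθ
      rw [← hh] at hx'
      have hx'pos : 0 < |x - z + θ * h| := lt_of_lt_of_le (by positivity) hx'
      have hbd' := hbd (x - z + θ * h)
      have hcc := hconv (x - z + θ * h)
      have e1 : β * |x - z| * deriv (deriv ψ) (x - z + θ * h) ≤ M := by
        calc β * |x - z| * deriv (deriv ψ) (x - z + θ * h)
            ≤ |x - z + θ * h| * deriv (deriv ψ) (x - z + θ * h) :=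
              mul_le_mul_of_nonneg_right hx' hcc
          _ ≤ M := hbd'
      have hCalt : C = M * (β + 1) / (2 * (β * |x - z|)) := by
        rw [hC]; field_simp
      clear_value h C
      rw [hCalt, div_mul_eq_mul_div, le_div_iff₀ (by positivity : (0:ℝ) < 2 * (β * |x - z|))]
      nlinarith [mul_le_mul_of_nonneg_right e1 (sq_nonneg h),
        mul_nonneg (mul_nonneg hM.le hβ.le) (sq_nonneg h), sq_nonneg h]
  have hint : (∫⁻ u, ENNReal.ofReal (ψ (x - z + c x u - c z u) - ψ (x - z) -
        deriv ψ (x - z) * (c x u - c z u)) ∂ν) ≤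
      ENNReal.ofReal C * ∫⁻ u, ENNReal.ofReal ((c x u - c z u)^2) ∂ν := by
    rw [← lintegral_const_mul' _ _ ENNReal.ofReal_ne_top]
    refine lintegral_mono fun u => ?_
    rw [← ENNReal.ofReal_mul hC0]
    exact ENNReal.ofReal_le_ofReal (key u)
  have hD := hbd (x - z)
  have hDpos := hconv (x - z)
  have hfirst : ENNReal.ofReal ((1 / 2) * deriv (deriv ψ) (x - z) * (σ x - σ z) ^ 2) ≤
      ENNReal.ofReal C * ENNReal.ofReal ((σ x - σ z)^2) := by
    rw [← ENNReal.ofReal_mul hC0]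
    apply ENNReal.ofReal_le_ofReal
    have hCalt : C = M * (β + 1) / (2 * (β * |x - z|)) := by
      rw [hC]; field_simp
    rw [hCalt, div_mul_eq_mul_div (M * (β + 1)) (2 * (β * |x - z|)) ((σ x - σ z)^2),
      le_div_iff₀ (by positivity : (0:ℝ) < 2 * (β * |x - z|))]
    nlinarith [mul_le_mul_of_nonneg_left
        (mul_le_mul_of_nonneg_right hD (sq_nonneg (σ x - σ z))) hβ.le,
      mul_nonneg hM.le (sq_nonneg (σ x - σ z))]
  calc ENNReal.ofReal ((1 / 2) * deriv (deriv ψ) (x - z) * (σ x - σ z) ^ 2) +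
        (∫⁻ u, ENNReal.ofReal (ψ (x - z + c x u - c z u) - ψ (x - z) -
          deriv ψ (x - z) * (c x u - c z u)) ∂ν)
      ≤ ENNReal.ofReal C * ENNReal.ofReal ((σ x - σ z)^2) +
        ENNReal.ofReal C * ∫⁻ u, ENNReal.ofReal ((c x u - c z u)^2) ∂ν :=
        add_le_add hfirst hint
    _ = ENNReal.ofReal C * (ENNReal.ofReal ((σ x - σ z)^2) +
        ∫⁻ u, ENNReal.ofReal ((c x u - c z u)^2) ∂ν) := (mul_add _ _ _).symm
    _ ≤ ENNReal.ofReal C * ENNReal.ofReal (κ * |x - z|) :=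
        mul_le_mul_right (hcont x z) _
    _ = ENNReal.ofReal (C * (κ * |x - z|)) := (ENNReal.ofReal_mul hC0).symm
    _ ≤ ENNReal.ofReal ((M * κ / 2) * (1 + 1 / β)) := by
        apply le_of_eq
        congr 1
        rw [hC]
        field_simp
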